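/- Let Z ⊆ R be a set of Lebesgue measure zero. Then there exists a Lipschitz function f : R → R which is subdifferentiable at no point of Z. -/

import Mathlib

open Filter Topology MeasureTheory
open scoped NNReal ENNReal

noncomputable section

/-- The underlying space of the first Heisenberg group: `ℝ³`. -/
abbrev Heis : Type := ℝ × ℝ × ℝ

/-- Heisenberg group multiplication:
`(x,y,t)·(x',y',t') = (x+x', y+y', t+t' − 2(xy' − yx'))`. -/
def hmul (p q : Heis) : Heis :=
  (p.1 + q.1, p.2.1 + q.2.1, p.2.2 + q.2.2 - 2 * (p.1 * q.2.1 - p.2.1 * q.1))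

/-- Heisenberg group inverse: `(x,y,t)⁻¹ = (−x,−y,−t)`. -/
def hinv (p : Heis) : Heis := (-p.1, -p.2.1, -p.2.2)

/-- Koranyi norm: `‖(x,y,t)‖ = ((x²+y²)² + t²)^(1/4)`. -/
def knorm (p : Heis) : ℝ := ((p.1 ^ 2 + p.2.1 ^ 2) ^ 2 + p.2.2 ^ 2) ^ ((1 : ℝ) / 4)

/-- Koranyi distance: `d_k(a,b) = ‖a⁻¹·b‖_k`. -/
def dk (p q : Heis) : ℝ := knorm (hmul (hinv p) q)

/-- Euclidean distance on `ℝ³`. -/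
def de (p q : Heis) : ℝ :=
  Real.sqrt ((p.1 - q.1) ^ 2 + (p.2.1 - q.2.1) ^ 2 + (p.2.2 - q.2.2) ^ 2)

/-- Dilation `δ_r(x,y,t) = (rx, ry, r²t)`. -/
def hdil (r : ℝ) (p : Heis) : Heis := (r * p.1, r * p.2.1, r ^ 2 * p.2.2)

/-- Open ball with respect to a distance function `d`. -/
def ballD {M : Type*} (d : M → M → ℝ) (x : M) (r : ℝ) : Set M := {y | d x y < r}

/-- `E` is `lam`-porous at `a` with respect to the distance function `d`: there are points
`x n` converging to `a` such that `B(x n, lam * d(x n, a))` misses `E`. -/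
def PorousAtD {M : Type*} (d : M → M → ℝ) (lam : ℝ) (E : Set M) (a : M) : Prop :=
  ∃ x : ℕ → M, Tendsto (fun n => d (x n) a) atTop (𝓝 0) ∧
    ∀ n, ballD d (x n) (lam * d (x n) a) ∩ E = ∅

/-- `E` is porous w.r.t. `d`: a single `lam ∈ (0,1)` works at every point of `E`. -/
def PorousD {M : Type*} (d : M → M → ℝ) (E : Set M) : Prop :=
  ∃ lam : ℝ, 0 < lam ∧ lam < 1 ∧ ∀ a ∈ E, PorousAtD d lam E a

/-- `E` is σ-porous w.r.t. `d`: a countable union of porous sets. -/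
def SigmaPorousD {M : Type*} (d : M → M → ℝ) (E : Set M) : Prop :=
  ∃ f : ℕ → Set M, (∀ n, PorousD d (f n)) ∧ E = ⋃ n, f n

/-- The translated dilated Cantor set `A_{n,k} = 2⁻ⁿ + k·2⁻²ⁿ + 2⁻²ⁿ·C`. -/
def Acantor (n k : ℕ) : Set ℝ :=
  (fun c => (2:ℝ) ^ (-(n:ℤ)) + (k : ℝ) * (2:ℝ) ^ (-(2*n:ℤ)) + (2:ℝ) ^ (-(2*n:ℤ)) * c) ''
    cantorSet

/-- `|(x,y)|` for `p = (x,y,t)`. -/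
def normxy (p : Heis) : ℝ := Real.sqrt (p.1 ^ 2 + p.2.1 ^ 2)

/-- `{0} ∪ ⋃_{n≥1} ⋃_{0 ≤ k ≤ 2ⁿ−1} {p : |(x,y)| ∈ A_{n,k}}`. -/
def cantorUnion : Set Heis :=
  {(0 : Heis)} ∪
    ⋃ (n : ℕ) (_ : 1 ≤ n) (k : ℕ) (_ : k < 2 ^ n), {p : Heis | normxy p ∈ Acantor n k}

/-- The cone `Λ = {(x,y,t) : |t| ≤ |(x,y)|}`. -/
def LambdaCone : Set Heis := {p : Heis | |p.2.2| ≤ normxy p}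

/-- The set `P_e = Λ ∩ ({0} ∪ ⋃ A_{n,k}-cylinders)`. -/
def Pe : Set Heis := LambdaCone ∩ cantorUnion

/-- The cusp `Υ = {(x,y,t) : |t| ≥ 2|(x,y)|²}`. -/
def UpsilonCusp : Set Heis := {p : Heis | 2 * normxy p ^ 2 ≤ |p.2.2|}

/-- The set `P_c = Υ ∩ ({0} ∪ ⋃ A_{n,k}-cylinders)`. -/
def Pc : Set Heis := UpsilonCusp ∩ cantorUnion

/-- `L : H¹ → ℝ` is group linear: additive on the group and homogeneous for dilations. -/
def GroupLinear (L : Heis → ℝ) : Prop :=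
  (∀ p q, L (hmul p q) = L p + L q) ∧ ∀ r : ℝ, 0 < r → ∀ p, L (hdil r p) = r * L p

/-- Pansu differentiability of `f : H¹ → ℝ` at `x₀`. -/
def PansuDiffAt (f : Heis → ℝ) (x₀ : Heis) : Prop :=
  ∃ L : Heis → ℝ, GroupLinear L ∧
    Tendsto (fun h => (f (hmul x₀ h) - f x₀ - L h) / dk h 0) (𝓝[≠] (0 : Heis)) (𝓝 0)

/-- Pansu subdifferentiability of `f : H¹ → ℝ` at `x₀`:
`liminf_{h→0} (f(x₀h) − f(x₀) − L(h))/d_k(h) ≥ 0` for some group linear `L`. -/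
def PansuSubdiffAt (f : Heis → ℝ) (x₀ : Heis) : Prop :=
  ∃ L : Heis → ℝ, GroupLinear L ∧ ∀ ε : ℝ, 0 < ε →
    ∀ᶠ h in 𝓝[≠] (0 : Heis), -ε < (f (hmul x₀ h) - f x₀ - L h) / dk h 0

/-- Subdifferentiability of `F : ℝ → ℝ` at `a`:
`liminf_{t→0} (F(a+t) − F(a) − ℓt)/|t| ≥ 0` for some `ℓ ∈ ℝ`. -/
def RSubdiffAt (F : ℝ → ℝ) (a : ℝ) : Prop :=
  ∃ l : ℝ, ∀ ε : ℝ, 0 < ε →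
    ∀ᶠ t in 𝓝[≠] (0 : ℝ), -ε < (F (a + t) - F a - l * t) / |t|

/-- `f` is Lipschitz with respect to the Koranyi distance. -/
def DkLipschitz (f : Heis → ℝ) : Prop :=
  ∃ K : ℝ, 0 ≤ K ∧ ∀ p q, |f p - f q| ≤ K * dk p q

/-- The first horizontal derivative `X₁f(p)` has value `d`. -/
def HDeriv1 (f : Heis → ℝ) (p : Heis) (d : ℝ) : Prop :=
  Tendsto (fun s : ℝ => (f (hmul p (s, 0, 0)) - f p) / s) (𝓝[≠] (0 : ℝ)) (𝓝 d)

/-- The second horizontal derivative `X₂f(p)` has value `d`. -/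
def HDeriv2 (f : Heis → ℝ) (p : Heis) (d : ℝ) : Prop :=
  Tendsto (fun s : ℝ => (f (hmul p (0, s, 0)) - f p) / s) (𝓝[≠] (0 : ℝ)) (𝓝 d)

open Metric Set

lemma refineZ (Z U : Set ℝ) (hZ : volume Z = 0) (hU : IsOpen U) (hZU : Z ⊆ U)
    (hUc : Uᶜ.Nonempty) (hUvol : volume U ≤ 1) (δ : ℝ) (hδ : 0 < δ) :
    ∃ V : Set ℝ, IsOpen V ∧ Z ⊆ V ∧ V ⊆ U ∧ volume V ≤ ENNReal.ofReal δ ∧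
      ∀ a ∈ Z, volume (V ∩ Set.Ioo (a - infDist a Uᶜ) (a + infDist a Uᶜ)) ≤
        ENNReal.ofReal (infDist a Uᶜ / 8) := by
  classical
  set C : ℝ := min δ 1 / 100000 with hCdef
  have hCpos : 0 < C := by positivity
  have hCδ : C ≤ δ / 100000 := by
    have : min δ 1 ≤ δ := min_le_left _ _
    rw [hCdef]; linarith
  have hC1 : C ≤ 1 / 100000 := by
    have : min δ 1 ≤ 1 := min_le_right _ _
    rw [hCdef]; linarith
  -- basic facts about r a := infDist a Uᶜ
  have hrpos : ∀ a ∈ Z, 0 < infDist a Uᶜ := by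
    intro a ha
    refine (hU.isClosed_compl.notMem_iff_infDist_pos hUc).1 ?_
    simp [hZU ha]
  have hball : ∀ a ∈ Z, ball a (infDist a Uᶜ) ⊆ U := by
    intro a ha x hx
    by_contra hxU
    have : infDist a Uᶜ ≤ dist a x := infDist_le_dist_of_mem hxU
    rw [mem_ball, dist_comm] at hx; linarith
  have hrlt1 : ∀ a ∈ Z, infDist a Uᶜ < 1 := by
    intro a ha
    have h1 : volume (ball a (infDist a Uᶜ)) ≤ 1 := le_trans (measure_mono (hball a ha)) hUvol
    rw [Real.volume_ball] at h1
    have h2 : 2 * infDist a Uᶜ ≤ 1 := by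
      by_contra h
      push_neg at h
      have := (ENNReal.one_lt_ofReal).2 h
      exact absurd (lt_of_lt_of_le this h1) (lt_irrefl _)
    linarith
  set Zj : ℕ → Set ℝ := fun j =>
    {a ∈ Z | (1/2:ℝ)^(j+1) ≤ infDist a Uᶜ ∧ infDist a Uᶜ < (1/2:ℝ)^j} with hZjdef
  have hZmem : ∀ a ∈ Z, ∃ j : ℕ, a ∈ Zj j := by
    intro a ha
    have hex : ∃ n : ℕ, (1/2:ℝ)^n ≤ infDist a Uᶜ := by
      obtain ⟨n, hn⟩ := exists_pow_lt_of_lt_one (hrpos a ha) (by norm_num : (1/2:ℝ) < 1)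
      exact ⟨n, hn.le⟩
    set n := Nat.find hex with hn
    have hspec : (1/2:ℝ)^n ≤ infDist a Uᶜ := Nat.find_spec hex
    have hn1 : 1 ≤ n := by
      rcases Nat.eq_zero_or_pos n with h0 | h
      · exfalso
        rw [h0, pow_zero] at hspec
        linarith [hrlt1 a ha]
      · exact h
    refine ⟨n - 1, ha, ?_, ?_⟩
    · rwa [Nat.sub_add_cancel hn1]
    · have : n - 1 < n := by omega
      have := Nat.find_min hex this
      push_neg at this; exact this
  -- choose open supersets
  have hOex : ∀ j : ℕ, ∃ O : Set ℝ, Zj j ⊆ O ∧ IsOpen O ∧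
      volume O ≤ ENNReal.ofReal (C * (1/4)^j) := by
    intro j
    have hz : volume (Zj j) = 0 :=
      measure_mono_null (fun a ha => ha.1) hZ
    have hlt : volume (Zj j) < ENNReal.ofReal (C * (1/4)^j) := by
      rw [hz]; exact ENNReal.ofReal_pos.2 (by positivity)
    obtain ⟨O, hO1, hO2, hO3⟩ := Set.exists_isOpen_lt_of_lt _ _ hlt
    exact ⟨O, hO1, hO2, hO3.le⟩
  choose O hO1 hO2 hO3 using hOex
  set W : ℕ → Set ℝ := fun j => O j ∩ Metric.thickening ((1/2:ℝ)^j/100) (Zj j) with hWdef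
  have hWvol : ∀ j, volume (W j) ≤ ENNReal.ofReal (C * (1/4)^j) :=
    fun j => le_trans (measure_mono (Set.inter_subset_left)) (hO3 j)
  refine ⟨⋃ j, W j, ?_, ?_, ?_, ?_, ?_⟩
  · exact isOpen_iUnion fun j => (hO2 j).inter isOpen_thickening
  · intro a ha
    obtain ⟨j, hj⟩ := hZmem a ha
    exact Set.mem_iUnion.2 ⟨j, (hO1 j) hj,
      Metric.self_subset_thickening (by positivity) _ hj⟩
  · -- V ⊆ U
    intro x hx
    obtain ⟨j, hxj⟩ := Set.mem_iUnion.1 hx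
    obtain ⟨b, hb, hdb⟩ := Metric.mem_thickening_iff.1 hxj.2
    by_contra hxU
    have h1 : infDist b Uᶜ ≤ dist b x := infDist_le_dist_of_mem hxU
    have h2 : (1/2:ℝ)^(j+1) ≤ infDist b Uᶜ := hb.2.1
    rw [dist_comm] at h1
    have : (1/2:ℝ)^(j+1) = (1/2)^j/2 := by ring
    nlinarith [pow_pos (by norm_num : (0:ℝ) < 1/2) j]
  · -- total volume
    refine le_trans (measure_iUnion_le _) ?_
    have h1 : ∀ j, volume (W j) ≤ ENNReal.ofReal C * (ENNReal.ofReal (1/4))^j := by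
      intro j
      refine le_trans (hWvol j) ?_
      rw [← ENNReal.ofReal_pow (by norm_num), ← ENNReal.ofReal_mul hCpos.le]
    refine le_trans (ENNReal.tsum_le_tsum h1) ?_
    rw [ENNReal.tsum_mul_left, ENNReal.tsum_geometric]
    have h2 : (1 : ℝ≥0∞) - ENNReal.ofReal (1/4) = ENNReal.ofReal (3/4) := by
      rw [← ENNReal.ofReal_one, ← ENNReal.ofReal_sub _ (by norm_num)]; norm_num
    rw [h2]
    rw [← ENNReal.ofReal_inv_of_pos (by norm_num)]
    rw [← ENNReal.ofReal_mul hCpos.le]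
    refine ENNReal.ofReal_le_ofReal ?_
    rw [hCdef]
    have : min δ 1 ≤ δ := min_le_left _ _
    nlinarith
  · -- pointwise bound
    intro a ha
    obtain ⟨j, hj⟩ := hZmem a ha
    set r : ℝ := infDist a Uᶜ with hrdef
    set m : ℕ := j - 2 with hmdef
    have hjm : j ≤ m + 2 := by omega
    have hsub : (⋃ j', W j') ∩ Set.Ioo (a - r) (a + r) ⊆ ⋃ i, W (m + i) := by
      intro x hx
      obtain ⟨hx1, hx2⟩ := hx
      obtain ⟨j', hxj'⟩ := Set.mem_iUnion.1 hx1
      have hj'm : m ≤ j' := by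
        by_contra hlt
        push_neg at hlt
        have hj3 : j' + 3 ≤ j := by omega
        obtain ⟨b, hb, hdb⟩ := Metric.mem_thickening_iff.1 hxj'.2
        have h1 : (1/2:ℝ)^(j'+1) ≤ infDist b Uᶜ := hb.2.1
        have h2 : infDist b Uᶜ ≤ infDist a Uᶜ + dist b a := infDist_le_infDist_add_dist
        have h3 : dist b a ≤ dist b x + dist x a := dist_triangle _ _ _
        have h4 : dist x a < r := by
          rw [Real.dist_eq, abs_lt]; constructor <;> [linarith [hx2.1]; linarith [hx2.2]]
        have h5 : r < (1/2:ℝ)^j := hj.2.2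
        have h6 : (1/2:ℝ)^j ≤ (1/2)^(j'+3) :=
          pow_le_pow_of_le_one (by norm_num) (by norm_num) hj3
        rw [dist_comm] at hdb
        have hp : (0:ℝ) < (1/2)^j' := pow_pos (by norm_num) _
        have e1 : (1/2:ℝ)^(j'+1) = (1/2)^j'/2 := by ring
        have e2 : (1/2:ℝ)^(j'+3) = (1/2)^j'/8 := by ring
        nlinarith
      refine Set.mem_iUnion.2 ⟨j' - m, ?_⟩
      rwa [Nat.add_sub_cancel' hj'm]
    refine le_trans (measure_mono hsub) ?_
    refine le_trans (measure_iUnion_le _) ?_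
    have h1 : ∀ i, volume (W (m+i)) ≤
        ENNReal.ofReal (C * (1/4)^m) * (ENNReal.ofReal (1/4))^i := by
      intro i
      refine le_trans (hWvol (m+i)) ?_
      rw [← ENNReal.ofReal_pow (by norm_num), ← ENNReal.ofReal_mul (by positivity),
        pow_add]
      exact le_of_eq (by ring_nf)
    refine le_trans (ENNReal.tsum_le_tsum h1) ?_
    rw [ENNReal.tsum_mul_left, ENNReal.tsum_geometric]
    have h2 : (1 : ℝ≥0∞) - ENNReal.ofReal (1/4) = ENNReal.ofReal (3/4) := by
      rw [← ENNReal.ofReal_one, ← ENNReal.ofReal_sub _ (by norm_num)]; norm_num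
    rw [h2, ← ENNReal.ofReal_inv_of_pos (by norm_num), ← ENNReal.ofReal_mul (by positivity)]
    refine ENNReal.ofReal_le_ofReal ?_
    -- real inequality: C * (1/4)^m * (3/4)⁻¹ ≤ r / 8
    have hm16 : ((1:ℝ)/4)^m ≤ 16 * (1/4)^j := by
      have := pow_le_pow_of_le_one (by norm_num : (0:ℝ) ≤ 1/4) (by norm_num) hjm
      have e : ((1:ℝ)/4)^(m+2) = (1/4)^m/16 := by ring
      linarith [this, e]
    have h4j : ((1:ℝ)/4)^j ≤ (1/2)^j := by
      apply pow_le_pow_left₀ (by norm_num) (by norm_num)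
    have hrj : (1/2:ℝ)^j ≤ 2 * r := by
      have := hj.2.1
      have e : (1/2:ℝ)^(j+1) = (1/2)^j/2 := by ring
      linarith [this, e]
    have hrpos' : 0 < r := hrpos a ha
    nlinarith [pow_pos (by norm_num : (0:ℝ) < 1/4) j, pow_pos (by norm_num : (0:ℝ) < 1/4) m]

noncomputable def fE (E : Set ℝ) (x : ℝ) : ℝ :=
  (volume (E ∩ Set.Ioc 0 x)).toReal - (volume (E ∩ Set.Ioc x 0)).toReal

lemma fE_sub (E : Set ℝ) (hE : MeasurableSet E) (hfin : volume E ≠ ⊤) {x y : ℝ} (h : y ≤ x) :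
    fE E x - fE E y = (volume (E ∩ Set.Ioc y x)).toReal := by
  have hfin' : ∀ s : Set ℝ, volume (E ∩ s) ≠ ⊤ :=
    fun s => (lt_of_le_of_lt (measure_mono inter_subset_left) hfin.lt_top).ne
  have key : ∀ u v w : ℝ, u ≤ v → v ≤ w →
      (volume (E ∩ Set.Ioc u w)).toReal
        = (volume (E ∩ Set.Ioc u v)).toReal + (volume (E ∩ Set.Ioc v w)).toReal := by
    intro u v w huv hvw
    rw [← Set.Ioc_union_Ioc_eq_Ioc huv hvw, Set.inter_union_distrib_left,
      measure_union (Disjoint.mono inter_subset_right inter_subset_right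
        (Set.Ioc_disjoint_Ioc_of_le le_rfl)) (hE.inter measurableSet_Ioc),
      ENNReal.toReal_add (hfin' _) (hfin' _)]
  rcases le_or_gt 0 y with h0y | hy0
  · have hx0 : (0:ℝ) ≤ x := le_trans h0y h
    simp only [fE, Set.Ioc_eq_empty_of_le h0y, Set.Ioc_eq_empty_of_le hx0,
      Set.inter_empty, measure_empty, ENNReal.toReal_zero, sub_zero]
    rw [key 0 y x h0y h]; ring
  · rcases le_or_gt x 0 with hx0 | h0x
    · simp only [fE, Set.Ioc_eq_empty_of_le hx0, Set.Ioc_eq_empty_of_le hy0.le,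
        Set.inter_empty, measure_empty, ENNReal.toReal_zero, zero_sub, neg_sub_neg]
      rw [key y x 0 h hx0]; ring
    · simp only [fE, Set.Ioc_eq_empty_of_le h0x.le, Set.Ioc_eq_empty_of_le hy0.le,
        Set.inter_empty, measure_empty, ENNReal.toReal_zero, sub_zero, zero_sub, sub_neg_eq_add]
      rw [key y 0 x hy0.le h0x.le]; ring

lemma fE_lip (E : Set ℝ) (hE : MeasurableSet E) (hfin : volume E ≠ ⊤) :
    LipschitzWith 1 (fE E) := by
  refine LipschitzWith.of_dist_le_mul fun x y => ?_
  have key : ∀ u v : ℝ, v ≤ u → |fE E u - fE E v| ≤ u - v := by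
    intro u v huv
    rw [fE_sub E hE hfin huv, abs_of_nonneg ENNReal.toReal_nonneg]
    refine ENNReal.toReal_le_of_le_ofReal (by linarith) ?_
    refine le_trans (measure_mono inter_subset_right) ?_
    rw [Real.volume_Ioc]
  rw [Real.dist_eq, Real.dist_eq]
  push_cast
  rw [one_mul]
  rcases le_total y x with h | h
  · rw [abs_of_nonneg (by linarith : 0 ≤ x - y)]; exact key x y h
  · have h1 := key y x h
    rw [abs_sub_comm] at h1
    rw [abs_sub_comm x y, abs_of_nonneg (by linarith : 0 ≤ y - x)]
    exact h1

lemma exists_G (Z : Set ℝ) (hZ : volume Z = 0) :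
    ∃ G : ℕ → Set ℝ, (∀ n, IsOpen (G n)) ∧ (∀ n, Z ⊆ G n) ∧
      (∀ n, volume (G n) ≤ ENNReal.ofReal ((1/2)^n)) ∧ (∀ n, G (n+1) ⊆ G n) ∧
      (∀ n, ∀ a ∈ Z, volume (G (n+1) ∩ Set.Ioo (a - infDist a (G n)ᶜ) (a + infDist a (G n)ᶜ))
        ≤ ENNReal.ofReal (infDist a (G n)ᶜ / 8)) := by
  classical
  have compl_ne : ∀ U : Set ℝ, volume U ≤ 1 → Uᶜ.Nonempty := by
    intro U hU
    rcases Set.eq_empty_or_nonempty Uᶜ with h | h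
    · exfalso
      have : U = Set.univ := Set.compl_empty_iff.1 h
      rw [this, Real.volume_univ] at hU
      simp at hU
    · exact h
  have hof : ∀ n : ℕ, ENNReal.ofReal ((1/2:ℝ)^n) ≤ 1 := by
    intro n
    rw [← ENNReal.ofReal_one]
    exact ENNReal.ofReal_le_ofReal (pow_le_one₀ (by norm_num) (by norm_num))
  have base : ∃ U : Set ℝ, IsOpen U ∧ Z ⊆ U ∧ volume U ≤ ENNReal.ofReal ((1/2:ℝ)^0) := by
    have hlt : volume Z < ENNReal.ofReal ((1/2:ℝ)^0) := by
      rw [hZ]; exact ENNReal.ofReal_pos.2 (by norm_num)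
    obtain ⟨O, hO1, hO2, hO3⟩ := Set.exists_isOpen_lt_of_lt _ _ hlt
    exact ⟨O, hO2, hO1, hO3.le⟩
  have step_ex : ∀ (n : ℕ) (U : Set ℝ), IsOpen U → Z ⊆ U →
      volume U ≤ ENNReal.ofReal ((1/2:ℝ)^n) →
      ∃ V : Set ℝ, IsOpen V ∧ Z ⊆ V ∧ V ⊆ U ∧
        volume V ≤ ENNReal.ofReal ((1/2:ℝ)^(n+1)) ∧
        ∀ a ∈ Z, volume (V ∩ Set.Ioo (a - infDist a Uᶜ) (a + infDist a Uᶜ)) ≤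
          ENNReal.ofReal (infDist a Uᶜ / 8) := by
    intro n U hUo hZU hUv
    exact refineZ Z U hZ hUo hZU (compl_ne U (hUv.trans (hof n)))
      (hUv.trans (hof n)) _ (by positivity)
  choose! step hst1 hst2 hst3 hst4 hst5 using step_ex
  obtain ⟨U0, hU0o, hU0Z, hU0v⟩ := base
  set G : ℕ → Set ℝ := fun n => Nat.rec U0 (fun n U => step n U) n with hGdef
  have hG0 : G 0 = U0 := rfl
  have hGs : ∀ n, G (n+1) = step n (G n) := fun n => rfl
  have inv : ∀ n, IsOpen (G n) ∧ Z ⊆ G n ∧ volume (G n) ≤ ENNReal.ofReal ((1/2:ℝ)^n) := by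
    intro n
    induction n with
    | zero => exact ⟨hU0o, hU0Z, hU0v⟩
    | succ n ih =>
      obtain ⟨h1, h2, h3⟩ := ih
      rw [hGs n]
      exact ⟨hst1 n _ h1 h2 h3, hst2 n _ h1 h2 h3, hst4 n _ h1 h2 h3⟩
  refine ⟨G, fun n => (inv n).1, fun n => (inv n).2.1, fun n => (inv n).2.2, ?_, ?_⟩
  · intro n
    obtain ⟨h1, h2, h3⟩ := inv n
    rw [hGs n]; exact hst3 n _ h1 h2 h3
  · intro n
    obtain ⟨h1, h2, h3⟩ := inv n
    rw [hGs n]; exact hst5 n _ h1 h2 h3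


/-- For every Lebesgue null `Z ⊆ ℝ` there is a Lipschitz `f : ℝ → ℝ` subdifferentiable at
no point of `Z`. -/
theorem stmt_13 (Z : Set ℝ) (hZ : volume Z = 0) :
    ∃ f : ℝ → ℝ, (∃ K : ℝ≥0, LipschitzWith K f) ∧ ∀ a ∈ Z, ¬ RSubdiffAt f a := by
  classical
  obtain ⟨G, hGo, hGZ, hGvol, hGstep, hGkey⟩ := exists_G Z hZ
  have hGanti : ∀ m n, m ≤ n → G n ⊆ G m := by
    intro m n h
    induction n, h using Nat.le_induction with
    | base => exact subset_rfl
    | succ n hmn ih => exact (hGstep n).trans ih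
  have hGle1 : ∀ n, volume (G n) ≤ 1 := by
    intro n
    refine (hGvol n).trans ?_
    rw [← ENNReal.ofReal_one]
    exact ENNReal.ofReal_le_ofReal (pow_le_one₀ (by norm_num) (by norm_num))
  have hGc : ∀ n, (G n)ᶜ.Nonempty := by
    intro n
    rcases Set.eq_empty_or_nonempty (G n)ᶜ with h | h
    · exfalso
      have : G n = Set.univ := Set.compl_empty_iff.1 h
      have h2 := hGle1 n
      rw [this, Real.volume_univ] at h2
      simp at h2
    · exact h
  set E : Set ℝ := ⋃ m, (G (2*m) \ G (2*m+1)) with hEdef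
  have hEm : MeasurableSet E :=
    MeasurableSet.iUnion fun m => ((hGo _).measurableSet.diff (hGo _).measurableSet)
  have hEG0 : E ⊆ G 0 := by
    intro x hx
    obtain ⟨m, hm⟩ := Set.mem_iUnion.1 hx
    exact hGanti 0 (2*m) (Nat.zero_le _) hm.1
  have hEfin : volume E ≠ ⊤ :=
    (lt_of_le_of_lt (le_trans (measure_mono hEG0) (hGle1 0)) ENNReal.one_lt_top).ne
  refine ⟨fE E, ⟨1, fE_lip E hEm hEfin⟩, ?_⟩
  rintro a ha ⟨l, hl⟩
  set r : ℕ → ℝ := fun n => infDist a (G n)ᶜ with hrdef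
  have hrpos : ∀ n, 0 < r n := by
    intro n
    refine ((hGo n).isClosed_compl.notMem_iff_infDist_pos (hGc n)).1 ?_
    simp [hGZ n ha]
  have hball : ∀ n x, dist x a < r n → x ∈ G n := by
    intro n x hx
    by_contra hxg
    have h1 : infDist a (G n)ᶜ ≤ dist a x := infDist_le_dist_of_mem hxg
    rw [dist_comm] at h1
    exact absurd hx (by simp only [hrdef]; linarith)
  have hranti : ∀ m n, m ≤ n → r n ≤ r m := fun m n h =>
    infDist_le_infDist_of_subset (Set.compl_subset_compl.2 (hGanti m n h)) (hGc m)
  have hrsmall : ∀ n, r n ≤ (1/2:ℝ)^n := by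
    intro n
    have h1 : ball a (r n) ⊆ G n := fun x hx => hball n x (by rwa [mem_ball] at hx)
    have h2 : volume (ball a (r n)) ≤ ENNReal.ofReal ((1/2:ℝ)^n) :=
      (measure_mono h1).trans (hGvol n)
    rw [Real.volume_ball] at h2
    have h3 := (ENNReal.ofReal_le_ofReal_iff (by positivity)).1 h2
    linarith [hrpos n]
  -- Key A : right-hand smallness
  have keyA : ∀ n, fE E (a + r (2*n+1)/2) - fE E a ≤ (r (2*n+1)/2)/4 := by
    intro n
    set t : ℝ := r (2*n+1)/2 with htdef
    have htpos : 0 < t := by have := hrpos (2*n+1); positivity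
    have htr : t < r (2*n+1) := by have := hrpos (2*n+1); simp only [htdef]; linarith
    have hvol : volume (E ∩ Set.Ioc a (a + t)) ≤ ENNReal.ofReal (t/4) := by
      have h1 : E ∩ Set.Ioc a (a+t) ⊆
          G (2*n+2) ∩ Set.Ioo (a - r (2*n+1)) (a + r (2*n+1)) := by
        rintro x ⟨hxE, hxI⟩
        obtain ⟨m, hm⟩ := Set.mem_iUnion.1 hxE
        have hdist : dist x a < r (2*n+1) := by
          rw [Real.dist_eq, abs_lt]
          exact ⟨by linarith [hxI.1], by linarith [hxI.2]⟩
        have hmn : n + 1 ≤ m := by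
          by_contra hle
          push_neg at hle
          have h2 : dist x a < r (2*m+1) :=
            lt_of_lt_of_le hdist (hranti (2*m+1) (2*n+1) (by omega))
          exact hm.2 (hball (2*m+1) x h2)
        refine ⟨hGanti (2*n+2) (2*m) (by omega) hm.1, ?_⟩
        rw [Real.dist_eq, abs_lt] at hdist
        exact ⟨by linarith [hdist.1], by linarith [hdist.2]⟩
      calc volume (E ∩ Set.Ioc a (a+t))
          ≤ volume (G (2*n+2) ∩ Set.Ioo (a - r (2*n+1)) (a + r (2*n+1))) := measure_mono h1
        _ ≤ ENNReal.ofReal (r (2*n+1) / 8) := hGkey (2*n+1) a ha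
        _ = ENNReal.ofReal (t/4) := by rw [htdef]; ring_nf
    rw [fE_sub E hEm hEfin (by linarith : a ≤ a + t)]
    exact ENNReal.toReal_le_of_le_ofReal (by positivity) hvol
  -- Key B : left-hand fullness
  have keyB : ∀ n, 3/4 * (r (2*n)/2) ≤ fE E a - fE E (a - r (2*n)/2) := by
    intro n
    set s : ℝ := r (2*n)/2 with hsdef
    have hspos : 0 < s := by have := hrpos (2*n); positivity
    have hsr : s < r (2*n) := by have := hrpos (2*n); simp only [hsdef]; linarith
    rw [fE_sub E hEm hEfin (by linarith : a - s ≤ a)]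
    have hsub1 : Set.Ioc (a-s) a \ G (2*n+1) ⊆ E ∩ Set.Ioc (a-s) a := by
      rintro x ⟨hxI, hxG⟩
      refine ⟨Set.mem_iUnion.2 ⟨n, ?_, hxG⟩, hxI⟩
      apply hball (2*n) x
      rw [Real.dist_eq, abs_lt]
      exact ⟨by linarith [hxI.1, hsr], by linarith [hxI.2, hrpos (2*n)]⟩
    have hsub2 : volume (G (2*n+1) ∩ Set.Ioc (a-s) a) ≤ ENNReal.ofReal (s/4) := by
      refine le_trans (measure_mono ?_) (le_trans (hGkey (2*n) a ha) ?_)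
      · rintro x ⟨hx1, hx2⟩
        exact ⟨hx1, by constructor <;> [linarith [hx2.1]; linarith [hx2.2, hrpos (2*n)]]⟩
      · apply le_of_eq
        rw [hsdef]; ring_nf; rfl
    have hcover : Set.Ioc (a-s) a ⊆
        (Set.Ioc (a-s) a \ G (2*n+1)) ∪ (G (2*n+1) ∩ Set.Ioc (a-s) a) := by
      intro x hx
      by_cases hxg : x ∈ G (2*n+1)
      exacts [Or.inr ⟨hxg, hx⟩, Or.inl ⟨hx, hxg⟩]
    have h1 : ENNReal.ofReal s ≤ volume (E ∩ Set.Ioc (a-s) a) + ENNReal.ofReal (s/4) := by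
      have e1 : ENNReal.ofReal s = volume (Set.Ioc (a-s) a) := by
        rw [Real.volume_Ioc]; ring_nf
      rw [e1]
      refine le_trans (measure_mono hcover) (le_trans (measure_union_le _ _) ?_)
      exact add_le_add (measure_mono hsub1) hsub2
    have h2 : ENNReal.ofReal (3/4*s) ≤ volume (E ∩ Set.Ioc (a-s) a) := by
      rw [show (3/4*s : ℝ) = s - s/4 by ring, ENNReal.ofReal_sub _ (by positivity)]
      exact tsub_le_iff_right.2 h1
    have hfinE : volume (E ∩ Set.Ioc (a-s) a) ≠ ⊤ :=
      (lt_of_le_of_lt (measure_mono Set.inter_subset_left) hEfin.lt_top).ne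
    calc 3/4*s = (ENNReal.ofReal (3/4*s)).toReal := by
          rw [ENNReal.toReal_ofReal (by positivity)]
      _ ≤ (volume (E ∩ Set.Ioc (a-s) a)).toReal := ENNReal.toReal_mono hfinE h2
  -- extract δ from the subdifferentiability hypothesis
  have h8 := hl (1/8) (by norm_num)
  rw [eventually_nhdsWithin_iff, Metric.eventually_nhds_iff] at h8
  obtain ⟨d, hd, hdp⟩ := h8
  obtain ⟨n, hn⟩ := exists_pow_lt_of_lt_one hd (by norm_num : (1/2:ℝ) < 1)
  have hr2n : r (2*n) < d := by
    refine lt_of_le_of_lt (le_trans (hrsmall (2*n)) ?_) hn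
    exact pow_le_pow_of_le_one (by norm_num) (by norm_num) (by omega)
  rcases le_or_gt (3/8) l with hc | hc
  · set t : ℝ := r (2*n+1)/2 with htdef
    have htpos : 0 < t := by have := hrpos (2*n+1); positivity
    have htd : dist t (0:ℝ) < d := by
      rw [Real.dist_eq, sub_zero, abs_of_pos htpos]
      have := hranti (2*n) (2*n+1) (by omega)
      simp only [htdef]; linarith [hrpos (2*n)]
    have hq := hdp htd (Set.mem_compl_singleton_iff.2 (ne_of_gt htpos))
    have hnum : fE E (a + t) - fE E a - l * t ≤ -(1/8) * t := by
      have := keyA n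
      nlinarith
    rw [abs_of_pos htpos] at hq
    have : (fE E (a + t) - fE E a - l * t)/t ≤ -(1/8) := by
      rw [div_le_iff₀ htpos]; linarith
    linarith
  · set s : ℝ := r (2*n)/2 with hsdef
    have hspos : 0 < s := by have := hrpos (2*n); positivity
    have hsd : dist (-s) (0:ℝ) < d := by
      rw [Real.dist_eq, sub_zero, abs_neg, abs_of_pos hspos]
      simp only [hsdef]; linarith [hrpos (2*n)]
    have hq := hdp hsd (Set.mem_compl_singleton_iff.2 (by linarith : -s ≠ 0))
    rw [show a + -s = a - s by ring] at hq
    have hnum : fE E (a - s) - fE E a - l * (-s) ≤ -(1/8) * s := by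
      have := keyB n
      nlinarith
    rw [abs_neg, abs_of_pos hspos] at hq
    have : (fE E (a - s) - fE E a - l * (-s))/s ≤ -(1/8) := by
      rw [div_le_iff₀ hspos]; linarith
    linarith
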